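/- Let C, A, T be three qubits with A prepared in |0⟩. Performing the three-body X-parity measurement projector (I + s·X⊗X⊗X)/2 on (C,A,T) for outcome s, then measuring C in the Z basis, yields on input |ψ⟩_C ⊗ |0⟩_A ⊗ |φ⟩_T a state on (A,T) equal, up to a nonzero scalar and a Pauli correction determined by the outcomes, to CNOT applied to |ψ⟩⊗|φ⟩ (with A carrying the control). Hence this lattice-surgery circuit implements a CNOT with the control teleported from C to A. -/
import Mathlib


open Matrix Kronecker
set_option maxHeartbeats 1000000

noncomputable section

abbrev Q := Fin 2
abbrev MQ := Matrix Q Q ℂ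

/-- Pauli X matrix. -/
def PX : MQ := !![0, 1; 1, 0]
/-- Pauli Z matrix. -/
def PZ : MQ := !![1, 0; 0, -1]
/-- Hadamard matrix. -/
def Had : MQ := (((Real.sqrt 2 : ℝ) : ℂ))⁻¹ • !![1, 1; 1, -1]

def ket0 : Q → ℂ := ![1, 0]
def ket1 : Q → ℂ := ![0, 1]
/-- |+⟩ = (|0⟩+|1⟩)/√2 -/
def ketP : Q → ℂ := (((Real.sqrt 2 : ℝ) : ℂ))⁻¹ • ![1, 1]

/-- Tensor product of two single-qubit states. -/
def tp2 (u v : Q → ℂ) : Q × Q → ℂ := fun p => u p.1 * v p.2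
/-- Tensor product of three single-qubit states, grouped ((1,2),3). -/
def tp3 (u v w : Q → ℂ) : (Q × Q) × Q → ℂ := fun p => u p.1.1 * v p.1.2 * w p.2

/-- Standard CNOT, first factor control, second target. -/
def CNOT2 : Matrix (Q × Q) (Q × Q) ℂ :=
  Matrix.of fun p q => if p.1 = q.1 ∧ p.2 = q.2 + q.1 then 1 else 0

/-- Single-qubit Pauli corrections: I, X, Z, XZ. -/
def IsPauli (P : MQ) : Prop := P = 1 ∨ P = PX ∨ P = PZ ∨ P = PX * PZ

/-- Z-copy spider (green) as a 4×2 matrix. -/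
def dZm : Matrix (Q × Q) Q ℂ := Matrix.of fun p b => if p.1 = b ∧ p.2 = b then 1 else 0
/-- Z-merge spider (green) as a 2×4 matrix. -/
def mZm : Matrix Q (Q × Q) ℂ := Matrix.of fun b p => if p.1 = b ∧ p.2 = b then 1 else 0
/-- X-copy spider (red): δ_X|±⟩=|±±⟩. -/
def dXm : Matrix (Q × Q) Q ℂ :=
  Matrix.of fun p b => if p.1 + p.2 = b then (((Real.sqrt 2 : ℝ) : ℂ))⁻¹ else 0
/-- X-merge spider (red): μ_X|±±⟩=|±⟩. -/
def mXm : Matrix Q (Q × Q) ℂ :=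
  Matrix.of fun b p => if p.1 + p.2 = b then (((Real.sqrt 2 : ℝ) : ℂ))⁻¹ else 0
/-- Swap of the middle two wires of four, grouped ((1,2),(3,4)). -/
def Smid : Matrix ((Q × Q) × (Q × Q)) ((Q × Q) × (Q × Q)) ℂ :=
  Matrix.of fun p q =>
    if p.1.1 = q.1.1 ∧ p.1.2 = q.2.1 ∧ p.2.1 = q.1.2 ∧ p.2.2 = q.2.2 then 1 else 0

/-- ZZ-parity projector with sign s on wires (C,A) of (C,A,T). -/
def PZZCA (s : ℂ) : Matrix ((Q × Q) × Q) ((Q × Q) × Q) ℂ :=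
  (2:ℂ)⁻¹ • (1 + s • ((PZ ⊗ₖ PZ) ⊗ₖ (1 : MQ)))
/-- XX-parity projector with sign s on wires (A,T) of (C,A,T). -/
def PXXAT (s : ℂ) : Matrix ((Q × Q) × Q) ((Q × Q) × Q) ℂ :=
  (2:ℂ)⁻¹ • (1 + s • (((1 : MQ) ⊗ₖ PX) ⊗ₖ PX))

/-- Three-body X-parity projector with sign s on (C,A,T). -/
def P3X (s : ℂ) : Matrix ((Q × Q) × Q) ((Q × Q) × Q) ℂ :=
  (2:ℂ)⁻¹ • (1 + s • ((PX ⊗ₖ PX) ⊗ₖ PX))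

/-- The three-body X measurement on (C,A,T) with A prepared in |0⟩, followed by
a Z measurement of C with outcome b, yields on (A,T) a nonzero scalar multiple
of a Pauli correction times CNOT (A carrying the control). -/
theorem stmt3 :
    ∀ s : ℂ, (s = 1 ∨ s = -1) → ∀ b : Q,
      ∃ c : ℂ, c ≠ 0 ∧ ∃ P T : MQ, IsPauli P ∧ IsPauli T ∧
        ∀ ψ φ : Q → ℂ,
          (fun p : Q × Q => ((P3X s).mulVec (tp3 ψ ket0 φ)) ((b, p.1), p.2))
          = c • (((P ⊗ₖ T) * CNOT2).mulVec (tp2 ψ φ)) := by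
  intro s hs b
  rcases hs with rfl | rfl <;> fin_cases b
  · refine ⟨2⁻¹, by norm_num, 1, 1, Or.inl rfl, Or.inl rfl, ?_⟩
    intro ψ φ; funext p; obtain ⟨a, t⟩ := p
    fin_cases a <;> fin_cases t <;>
      simp (config := { decide := true }) [P3X, PX, tp3, tp2, ket0, CNOT2, Matrix.mulVec, Matrix.mul_apply,
        Fintype.sum_prod_type, Fin.sum_univ_two, Matrix.one_apply, dotProduct, Prod.ext_iff,
        Prod.fst_zero, Prod.snd_zero, Prod.fst_one, Prod.snd_one]
  · refine ⟨2⁻¹, by norm_num, PX, PX, Or.inr (Or.inl rfl), Or.inr (Or.inl rfl), ?_⟩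
    intro ψ φ; funext p; obtain ⟨a, t⟩ := p
    fin_cases a <;> fin_cases t <;>
      simp (config := { decide := true }) [P3X, PX, tp3, tp2, ket0, CNOT2, Matrix.mulVec, Matrix.mul_apply,
        Fintype.sum_prod_type, Fin.sum_univ_two, Matrix.one_apply, dotProduct, Prod.ext_iff,
        Prod.fst_zero, Prod.snd_zero, Prod.fst_one, Prod.snd_one]
  · refine ⟨2⁻¹, by norm_num, PZ, 1, Or.inr (Or.inr (Or.inl rfl)), Or.inl rfl, ?_⟩
    intro ψ φ; funext p; obtain ⟨a, t⟩ := p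
    fin_cases a <;> fin_cases t <;>
      simp (config := { decide := true }) [P3X, PX, PZ, tp3, tp2, ket0, CNOT2, Matrix.mulVec, Matrix.mul_apply,
        Fintype.sum_prod_type, Fin.sum_univ_two, Matrix.one_apply, dotProduct, Prod.ext_iff,
        Prod.fst_zero, Prod.snd_zero, Prod.fst_one, Prod.snd_one]
  · refine ⟨-2⁻¹, by norm_num, PX * PZ, PX, Or.inr (Or.inr (Or.inr rfl)), Or.inr (Or.inl rfl), ?_⟩
    intro ψ φ; funext p; obtain ⟨a, t⟩ := p
    fin_cases a <;> fin_cases t <;>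
      simp (config := { decide := true }) [P3X, PX, PZ, tp3, tp2, ket0, CNOT2, Matrix.mulVec, Matrix.mul_apply,
        Fintype.sum_prod_type, Fin.sum_univ_two, Matrix.one_apply, dotProduct, Prod.ext_iff,
        Prod.fst_zero, Prod.snd_zero, Prod.fst_one, Prod.snd_one]
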